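/- (Lemma 1: gain is constant on the attractor of a BSCC.) If g : S → ℝ satisfies g s = ∑_{s'} P s s' * g s' for all s, B is a BSCC of P, and s, s' both belong to the attractor of B, then g s = g s'. -/

import Mathlib

open Matrix Finset

/-- A matrix is row-stochastic if all entries are nonnegative and every row sums to 1. -/
def IsRowStochastic {S : Type*} [Fintype S] (P : Matrix S S ℝ) : Prop :=
  (∀ s s', 0 ≤ P s s') ∧ ∀ s, ∑ s', P s s' = 1

/-- `s` reaches `s'` if `(s, s')` is in the reflexive-transitive closure of the relation
"leads to", i.e. `P s s' > 0`. -/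
def Reaches {S : Type*} (P : Matrix S S ℝ) : S → S → Prop :=
  Relation.ReflTransGen fun s s' => 0 < P s s'

/-- A set `C` of states is closed if `P s s' = 0` whenever `s ∈ C` and `s' ∉ C`. -/
def IsClosedSet {S : Type*} (P : Matrix S S ℝ) (C : Set S) : Prop :=
  ∀ s ∈ C, ∀ s' ∉ C, P s s' = 0

/-- A bottom strongly connected component (BSCC) of `P` is a nonempty closed set in which
every two states reach each other. -/
def IsBSCC {S : Type*} (P : Matrix S S ℝ) (B : Set S) : Prop :=
  B.Nonempty ∧ IsClosedSet P B ∧ ∀ s ∈ B, ∀ s' ∈ B, Reaches P s s'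

/-- The attractor of a BSCC `B`: the set of states `s` such that every state `t` reachable from
`s` that belongs to some BSCC lies in `B`. -/
def attractor {S : Type*} (P : Matrix S S ℝ) (B : Set S) : Set S :=
  {s | ∀ t, Reaches P s t → (∃ B', IsBSCC P B' ∧ t ∈ B') → t ∈ B}

lemma reaches_mem_attractor {S : Type*} (P : Matrix S S ℝ) (B : Set S) {s t : S}
    (hs : s ∈ attractor P B) (h : Reaches P s t) : t ∈ attractor P B :=
  fun u hu => hs u (h.trans hu)

lemma reaches_mem_closed {S : Type*} (P : Matrix S S ℝ) {C : Set S}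
    (hC : IsClosedSet P C) {s t : S} (hs : s ∈ C) (h : Reaches P s t) : t ∈ C := by
  induction h with
  | refl => exact hs
  | tail _ hstep ih =>
    by_contra hmem
    exact absurd (hC _ ih _ hmem) (ne_of_gt hstep)

lemma key_sum {S : Type*} [Fintype S] {p f : S → ℝ} {c : ℝ}
    (hp : ∀ t, 0 ≤ p t) (hsum : ∑ t, p t = 1)
    (hf : ∀ t, 0 < p t → f t ≤ c) (heq : ∑ t, p t * f t = c) :
    ∀ t, 0 < p t → f t = c := by
  have h0 : ∑ t, p t * (c - f t) = 0 := by
    simp only [mul_sub]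
    rw [Finset.sum_sub_distrib, ← Finset.sum_mul, hsum, heq]
    ring
  have hnn : ∀ t ∈ Finset.univ, 0 ≤ p t * (c - f t) := by
    intro t _
    rcases (hp t).lt_or_eq with h | h
    · exact mul_nonneg (hp t) (sub_nonneg.mpr (hf t h))
    · simp [← h]
  intro t ht
  have := (Finset.sum_eq_zero_iff_of_nonneg hnn).mp h0 t (Finset.mem_univ t)
  have : c - f t = 0 := by
    rcases mul_eq_zero.mp this with h | h
    · exact absurd h (ne_of_gt ht)
    · exact h
  linarith

lemma max_prop {S : Type*} [Fintype S] (P : Matrix S S ℝ) (hP : IsRowStochastic P)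
    (g : S → ℝ) (hg : ∀ s, g s = ∑ s', P s s' * g s')
    (u : S) (hmax : ∀ w, Reaches P u w → g w ≤ g u) :
    ∀ w, Reaches P u w → g w = g u := by
  intro w hw
  induction hw with
  | refl => rfl
  | @tail b c hub hstep ih =>
    have hb : g b = g u := ih
    have hkey := key_sum (f := g) (p := P b) (hP.1 b) (hP.2 b)
      (fun t ht => (hmax t (hub.tail ht)).trans_eq hb.symm)
      ((hg b).symm)
    rw [hkey c hstep, hb]

lemma exists_reachable_BSCC {S : Type*} [Fintype S] (P : Matrix S S ℝ)
    (hP : IsRowStochastic P) (s : S) :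
    ∃ t, Reaches P s t ∧ ∃ B', IsBSCC P B' ∧ t ∈ B' := by
  classical
  let R : S → Finset S := fun u => Finset.univ.filter (fun v => Reaches P u v)
  have memR : ∀ u v, v ∈ R u ↔ Reaches P u v := by
    intro u v; simp [R]
  have hRs : s ∈ R s := (memR s s).mpr Relation.ReflTransGen.refl
  obtain ⟨t, htRs, hmin⟩ := (R s).exists_min_image (fun u => (R u).card) ⟨s, hRs⟩
  have hst : Reaches P s t := (memR s t).mp htRs
  refine ⟨t, hst, {v | Reaches P t v}, ⟨⟨t, Relation.ReflTransGen.refl⟩, ?_, ?_⟩,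
    Relation.ReflTransGen.refl⟩
  · intro v hv w hw
    by_contra hne
    exact hw (Relation.ReflTransGen.tail hv (lt_of_le_of_ne (hP.1 v w) (Ne.symm hne)))
  · intro u hu v hv
    have hRu : R u ⊆ R t := by
      intro x hx
      exact (memR t x).mpr (Relation.ReflTransGen.trans hu ((memR u x).mp hx))
    have hcard : (R t).card ≤ (R u).card :=
      hmin u ((memR s u).mpr (hst.trans hu))
    have : R u = R t := Finset.eq_of_subset_of_card_le hRu hcard
    exact (memR u v).mp (this ▸ (memR t v).mpr hv)

lemma const_on_B {S : Type*} [Fintype S] (P : Matrix S S ℝ) (hP : IsRowStochastic P)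
    (g : S → ℝ) (hg : ∀ s, g s = ∑ s', P s s' * g s')
    (B : Set S) (hB : IsBSCC P B) :
    ∀ x ∈ B, ∀ y ∈ B, g x = g y := by
  classical
  obtain ⟨⟨b0, hb0⟩, hclosed, hmut⟩ := hB
  obtain ⟨b, hbB, hbmax⟩ := (Finset.univ.filter (· ∈ B)).exists_max_image g
    ⟨b0, by simp [hb0]⟩
  have hbB' : b ∈ B := by simpa using hbB
  have hmax : ∀ w, Reaches P b w → g w ≤ g b := by
    intro w hw
    have : w ∈ B := reaches_mem_closed P hclosed hbB' hw
    exact hbmax w (by simpa using this)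
  intro x hx y hy
  have hgx := max_prop P hP g hg b hmax x (hmut b hbB' x hx)
  have hgy := max_prop P hP g hg b hmax y (hmut b hbB' y hy)
  rw [hgx, hgy]

lemma le_on_attractor {S : Type*} [Fintype S] (P : Matrix S S ℝ) (hP : IsRowStochastic P)
    (g : S → ℝ) (hg : ∀ s, g s = ∑ s', P s s' * g s')
    (B : Set S) (hB : IsBSCC P B) :
    ∀ s ∈ attractor P B, ∀ b ∈ B, g s ≤ g b := by
  classical
  intro s hs b hb
  obtain ⟨u, huR, humax⟩ := (Finset.univ.filter (Reaches P s ·)).exists_max_image g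
    ⟨s, Finset.mem_filter.mpr ⟨Finset.mem_univ _, Relation.ReflTransGen.refl⟩⟩
  have hsu : Reaches P s u := by simpa using huR
  have hmax : ∀ w, Reaches P u w → g w ≤ g u := by
    intro w hw
    exact humax w (Finset.mem_filter.mpr ⟨Finset.mem_univ _, hsu.trans hw⟩)
  obtain ⟨t, hut, hBSCC⟩ := exists_reachable_BSCC P hP u
  have htB : t ∈ B := (reaches_mem_attractor P B hs hsu) t hut hBSCC
  have h1 : g t = g u := max_prop P hP g hg u hmax t hut
  have h2 : g t = g b := const_on_B P hP g hg B hB t htB b hb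
  have h3 : g s ≤ g u := humax s (Finset.mem_filter.mpr ⟨Finset.mem_univ _, Relation.ReflTransGen.refl⟩)
  linarith

/-- Lemma 1: a harmonic vector is constant on the attractor of a BSCC. -/
theorem harmonic_const_on_attractor {S : Type*} [Fintype S] [Nonempty S]
    (P : Matrix S S ℝ) (hP : IsRowStochastic P)
    (g : S → ℝ) (hg : ∀ s, g s = ∑ s', P s s' * g s')
    (B : Set S) (hB : IsBSCC P B) :
    ∀ s ∈ attractor P B, ∀ s' ∈ attractor P B, g s = g s' := by
  obtain ⟨b, hb⟩ := hB.1
  have hneg : ∀ s, (-g) s = ∑ s', P s s' * (-g) s' := by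
    intro s
    simp only [Pi.neg_apply, mul_neg, Finset.sum_neg_distrib, neg_inj]
    exact hg s
  have hle := le_on_attractor P hP g hg B hB
  have hge := le_on_attractor P hP (-g) hneg B hB
  intro s hs s' hs'
  have h1 := hle s hs b hb
  have h2 := hle s' hs' b hb
  have h3 := hge s hs b hb
  have h4 := hge s' hs' b hb
  simp only [Pi.neg_apply, neg_le_neg_iff] at h3 h4
  linarith
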